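/- There exists a universal constant c > 0 such that for all positive integers n, all integers k with 1 ≤ k ≤ n−1, and all positive integers q with q ≤ 0.7·(n−k), one has Φ̄^{−1}(q/n) − Φ̄^{−1}(q/(n−k)) ≤ c · log(n/(n−k)) / max( √( max(log((n−k)/q), 0) ), 1 ). -/

import Mathlib

open Real MeasureTheory Set Filter

/-- Standard normal density. -/
noncomputable def gphi (t : ℝ) : ℝ := (Real.sqrt (2 * Real.pi))⁻¹ * Real.exp (-(t ^ 2) / 2)

/-- Standard normal upper-tail (survival) function. -/
noncomputable def Phibar (t : ℝ) : ℝ := ∫ s in Set.Ioi t, gphi s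

/-- Inverse of the standard normal upper-tail function. -/
noncomputable def PhibarInv (x : ℝ) : ℝ := Function.invFun Phibar x

lemma sqrt2pi_pos : 0 < Real.sqrt (2 * π) := Real.sqrt_pos.2 (by positivity)

lemma sqrt2pi_lb : 2.5 ≤ Real.sqrt (2 * π) := by
  rw [show (2.5:ℝ) = Real.sqrt (2.5^2) by rw [Real.sqrt_sq]; norm_num]
  exact Real.sqrt_le_sqrt (by nlinarith [pi_gt_d6])

lemma sqrt2pi_ub : Real.sqrt (2 * π) ≤ 2.51 := by
  rw [show (2.51:ℝ) = Real.sqrt (2.51^2) by rw [Real.sqrt_sq]; norm_num]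
  exact Real.sqrt_le_sqrt (by nlinarith [pi_lt_d6])

lemma gphi_eq (t : ℝ) : gphi t = (Real.sqrt (2 * π))⁻¹ * Real.exp (-(1/2) * t ^ 2) := by
  unfold gphi; ring_nf

lemma gphi_pos (t : ℝ) : 0 < gphi t := by
  unfold gphi; positivity

lemma gphi_le (t : ℝ) : gphi t ≤ (Real.sqrt (2 * π))⁻¹ := by
  unfold gphi
  have h1 : Real.exp (-(t^2)/2) ≤ 1 := Real.exp_le_one_iff.2 (by nlinarith [sq_nonneg t])
  have h2 : (0:ℝ) ≤ (Real.sqrt (2 * π))⁻¹ := by positivity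
  calc (Real.sqrt (2 * π))⁻¹ * Real.exp (-(t^2)/2) ≤ (Real.sqrt (2 * π))⁻¹ * 1 :=
        mul_le_mul_of_nonneg_left h1 h2
    _ = (Real.sqrt (2 * π))⁻¹ := by ring

lemma gphi_le_one (t : ℝ) : gphi t ≤ 1 := by
  have := gphi_le t
  have h := sqrt2pi_lb
  have : (Real.sqrt (2*π))⁻¹ ≤ 1 := by
    rw [inv_le_one_iff₀]; right; linarith
  linarith [gphi_le t]

lemma gphi_anti {s t : ℝ} (h : s ^ 2 ≤ t ^ 2) : gphi t ≤ gphi s := by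
  unfold gphi
  have h1 := Real.exp_le_exp.2 (show -(t^2)/2 ≤ -(s^2)/2 by linarith)
  exact mul_le_mul_of_nonneg_left h1 (by positivity)

lemma continuous_gphi : Continuous gphi := by
  unfold gphi; continuity

lemma integrable_gphi : Integrable gphi := by
  have h : Integrable (fun x : ℝ => (Real.sqrt (2 * π))⁻¹ * Real.exp (-(1/2) * x ^ 2)) :=
    (integrable_exp_neg_mul_sq (by norm_num)).const_mul _
  exact h.congr (Eventually.of_forall fun x => (gphi_eq x).symm)

lemma integral_gphi : ∫ s, gphi s = 1 := by
  have h : ∫ s : ℝ, gphi s = (Real.sqrt (2 * π))⁻¹ * ∫ s : ℝ, Real.exp (-(1/2) * s ^ 2) := by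
    rw [← MeasureTheory.integral_const_mul]
    congr 1; ext s; exact gphi_eq s
  rw [h, integral_gaussian]
  rw [show π / (1/2 : ℝ) = 2 * π by ring]
  field_simp

lemma integrable_mul_gphi : Integrable (fun s : ℝ => s * gphi s) := by
  have h : Integrable (fun x : ℝ => (Real.sqrt (2 * π))⁻¹ * (x * Real.exp (-(1/2) * x ^ 2))) :=
    (integrable_mul_exp_neg_mul_sq (by norm_num)).const_mul _
  exact h.congr (Eventually.of_forall fun x => by
    show (Real.sqrt (2 * π))⁻¹ * (x * Real.exp (-(1/2) * x ^ 2)) = x * gphi x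
    rw [gphi_eq]; ring)

lemma tendsto_gphi_atTop : Tendsto gphi atTop (nhds 0) := by
  have h1 : Tendsto (fun t : ℝ => -(1/2) * t ^ 2) atTop atBot := by
    apply Tendsto.const_mul_atTop_of_neg (by norm_num)
    exact tendsto_pow_atTop (by norm_num)
  have h2 : Tendsto (fun t : ℝ => Real.exp (-(1/2) * t ^ 2)) atTop (nhds 0) :=
    Real.tendsto_exp_atBot.comp h1
  have h3 := h2.const_mul (Real.sqrt (2 * π))⁻¹
  rw [mul_zero] at h3
  exact h3.congr fun t => (gphi_eq t).symm

lemma hasDerivAt_gphi (s : ℝ) : HasDerivAt gphi (-s * gphi s) s := by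
  have h1 : HasDerivAt (fun t : ℝ => -(t ^ 2) / 2) (-s) s := by
    have := ((hasDerivAt_pow 2 s).neg).div_const 2
    simpa using this.congr_deriv (by push_cast; ring)
  have h2 : HasDerivAt gphi ((Real.sqrt (2 * π))⁻¹ * (Real.exp (-(s ^ 2) / 2) * -s)) s :=
    (h1.exp).const_mul (Real.sqrt (2 * π))⁻¹
  convert h2 using 1
  show -s * ((Real.sqrt (2 * π))⁻¹ * Real.exp (-(s ^ 2) / 2)) = _
  ring

lemma integral_Ioi_mul_gphi (t : ℝ) : ∫ s in Set.Ioi t, s * gphi s = gphi t := by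
  have hd : ∀ x ∈ Set.Ici t, HasDerivAt (fun s => -gphi s) (x * gphi x) x := by
    intro x _
    exact (hasDerivAt_gphi x).neg.congr_deriv (by ring)
  have hi : IntegrableOn (fun s : ℝ => s * gphi s) (Set.Ioi t) := integrable_mul_gphi.integrableOn
  have ht : Tendsto (fun s => -gphi s) atTop (nhds 0) := by
    simpa using tendsto_gphi_atTop.neg
  have := integral_Ioi_of_hasDerivAt_of_tendsto' hd hi ht
  simpa using this

lemma phibar_split {x y : ℝ} (h : x ≤ y) :
    Phibar x = (∫ s in Set.Ioc x y, gphi s) + Phibar y := by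
  unfold Phibar
  rw [← MeasureTheory.setIntegral_union (Set.Ioc_disjoint_Ioi le_rfl) measurableSet_Ioi
      integrable_gphi.integrableOn integrable_gphi.integrableOn,
    Set.Ioc_union_Ioi_eq_Ioi h]

lemma phibar_sub {x y : ℝ} (h : x ≤ y) :
    Phibar x - Phibar y = ∫ s in Set.Ioc x y, gphi s := by
  rw [phibar_split h]; ring

lemma integral_Ioc_gphi_ge {x y m : ℝ} (h : x ≤ y) (hm : ∀ s ∈ Set.Ioc x y, m ≤ gphi s) :
    (y - x) * m ≤ ∫ s in Set.Ioc x y, gphi s := by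
  have h1 : (∫ _ in Set.Ioc x y, m) ≤ ∫ s in Set.Ioc x y, gphi s := by
    apply MeasureTheory.setIntegral_mono_on
    · exact integrableOn_const (by rw [Real.volume_Ioc]; exact ENNReal.ofReal_ne_top)
    · exact integrable_gphi.integrableOn
    · exact measurableSet_Ioc
    · exact hm
  rw [MeasureTheory.setIntegral_const, Real.volume_real_Ioc_of_le h,
    smul_eq_mul] at h1
  exact h1

lemma integral_Ioc_gphi_le {x y : ℝ} (h : x ≤ y) :
    (∫ s in Set.Ioc x y, gphi s) ≤ y - x := by
  have h1 : (∫ s in Set.Ioc x y, gphi s) ≤ ∫ _ in Set.Ioc x y, (1:ℝ) := by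
    apply MeasureTheory.setIntegral_mono_on
    · exact integrable_gphi.integrableOn
    · exact integrableOn_const (by rw [Real.volume_Ioc]; exact ENNReal.ofReal_ne_top)
    · exact measurableSet_Ioc
    · exact fun s _ => gphi_le_one s
  rw [MeasureTheory.setIntegral_const, Real.volume_real_Ioc_of_le h,
    smul_eq_mul, mul_one] at h1
  exact h1

lemma phibar_mono {x y : ℝ} (h : x ≤ y) : Phibar y ≤ Phibar x := by
  have h1 : (0:ℝ) ≤ ∫ s in Set.Ioc x y, gphi s :=
    MeasureTheory.setIntegral_nonneg measurableSet_Ioc fun s _ => (gphi_pos s).le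
  have := phibar_sub h
  linarith

lemma phibar_nonneg (t : ℝ) : 0 ≤ Phibar t :=
  MeasureTheory.setIntegral_nonneg measurableSet_Ioi fun s _ => (gphi_pos s).le

lemma phibar_strict {x y : ℝ} (h : x < y) : Phibar y < Phibar x := by
  set m := gphi (max (|x|) (|y|)) with hm
  have hmpos : 0 < m := gphi_pos _
  have hge : (y - x) * m ≤ ∫ s in Set.Ioc x y, gphi s := by
    apply integral_Ioc_gphi_ge h.le
    intro s hs
    apply gphi_anti
    have h1 : |s| ≤ max (|x|) (|y|) := by
      rw [abs_le]
      constructor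
      · have := neg_abs_le x; have := le_max_left (|x|) (|y|); linarith [hs.1]
      · have := le_abs_self y; have := le_max_right (|x|) (|y|); linarith [hs.2]
    calc s ^ 2 = |s| ^ 2 := (sq_abs s).symm
      _ ≤ (max (|x|) (|y|)) ^ 2 := by
          apply pow_le_pow_left₀ (abs_nonneg s) h1
  have := phibar_sub h.le
  nlinarith

lemma phibar_lipschitz : LipschitzWith 1 Phibar := by
  apply LipschitzWith.of_dist_le_mul
  intro x y
  rw [NNReal.coe_one, one_mul, Real.dist_eq, Real.dist_eq]
  rcases le_total x y with h | h
  · have h1 := phibar_sub h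
    have h2 := integral_Ioc_gphi_le h
    have h3 : (0:ℝ) ≤ ∫ s in Set.Ioc x y, gphi s :=
      MeasureTheory.setIntegral_nonneg measurableSet_Ioc fun s _ => (gphi_pos s).le
    rw [abs_of_nonneg (by linarith : (0:ℝ) ≤ Phibar x - Phibar y),
      abs_of_nonpos (by linarith : x - y ≤ 0)]
    linarith
  · have h1 := phibar_sub h
    have h2 := integral_Ioc_gphi_le h
    have h3 : (0:ℝ) ≤ ∫ s in Set.Ioc y x, gphi s :=
      MeasureTheory.setIntegral_nonneg measurableSet_Ioc fun s _ => (gphi_pos s).le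
    rw [abs_of_nonpos (by linarith : Phibar x - Phibar y ≤ 0),
      abs_of_nonneg (by linarith : (0:ℝ) ≤ x - y)]
    linarith

lemma continuous_phibar : Continuous Phibar := phibar_lipschitz.continuous

/-- Upper Mills bound: `Phibar t ≤ gphi t / t` for `t > 0`. -/
lemma phibar_upper {t : ℝ} (ht : 0 < t) : Phibar t ≤ gphi t / t := by
  have h1 : Phibar t ≤ ∫ s in Set.Ioi t, (1/t) * (s * gphi s) := by
    unfold Phibar
    apply MeasureTheory.setIntegral_mono_on
    · exact integrable_gphi.integrableOn
    · exact (integrable_mul_gphi.const_mul _).integrableOn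
    · exact measurableSet_Ioi
    · intro s hs
      have hs1 : t < s := hs
      have := gphi_pos s
      rw [show (1/t) * (s * gphi s) = (s/t) * gphi s by ring]
      have hh : (1:ℝ) ≤ s / t := (one_le_div ht).2 hs1.le
      nlinarith
  rw [MeasureTheory.integral_const_mul, integral_Ioi_mul_gphi] at h1
  calc Phibar t ≤ 1/t * gphi t := h1
    _ = gphi t / t := by ring

/-- Lower Mills bound: `gphi t / (t+1) ≤ Phibar t` for `t ≥ 0`. -/
lemma phibar_lower {t : ℝ} (ht : 0 ≤ t) : gphi t / (t + 1) ≤ Phibar t := by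
  set f : ℝ → ℝ := fun s => -(gphi s / (s + 1)) with hf
  set f' : ℝ → ℝ := fun s => gphi s * ((s^2 + s + 1) / (s + 1)^2) with hf'
  have hd : ∀ x ∈ Set.Ici t, HasDerivAt f (f' x) x := by
    intro x hx
    have hx0 : (0:ℝ) ≤ x := le_trans ht hx
    have hne : x + 1 ≠ 0 := by linarith
    have h1 : HasDerivAt (fun s : ℝ => s + 1) 1 x := (hasDerivAt_id x).add_const 1
    have h2 : HasDerivAt f (-((-x * gphi x * (x + 1) - gphi x * 1) / (x + 1) ^ 2)) x :=
      ((hasDerivAt_gphi x).div h1 hne).neg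
    convert h2 using 1
    rw [hf']
    field_simp
    ring
  have hratio : ∀ x : ℝ, 0 ≤ x → (x^2 + x + 1) / (x + 1)^2 ∈ Set.Icc (0:ℝ) 1 := by
    intro x hx
    constructor
    · positivity
    · rw [div_le_one (by positivity)]
      nlinarith
  have hfle : ∀ x ∈ Set.Ioi t, f' x ≤ gphi x := by
    intro x hx
    have hx0 : (0:ℝ) ≤ x := le_trans ht (le_of_lt hx)
    have h := hratio x hx0
    have := gphi_pos x
    rw [hf']
    nlinarith [h.1, h.2]
  have hfnn : ∀ x ∈ Set.Ioi t, 0 ≤ f' x := by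
    intro x hx
    have hx0 : (0:ℝ) ≤ x := le_trans ht (le_of_lt hx)
    have h := hratio x hx0
    have := gphi_pos x
    rw [hf']
    nlinarith [h.1]
  have hcont : ContinuousOn f' (Set.Ioi t) := by
    apply ContinuousOn.mul continuous_gphi.continuousOn
    apply ContinuousOn.div (by fun_prop) (by fun_prop)
    intro x hx
    have hx' : t < x := hx
    have : (0:ℝ) < x + 1 := by linarith
    positivity
  have hint : IntegrableOn f' (Set.Ioi t) := by
    apply MeasureTheory.Integrable.mono' integrable_gphi.integrableOn
      (hcont.aestronglyMeasurable measurableSet_Ioi)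
    filter_upwards [MeasureTheory.ae_restrict_mem measurableSet_Ioi] with x hx
    rw [Real.norm_eq_abs, abs_of_nonneg (hfnn x hx)]
    exact hfle x hx
  have htend : Tendsto f atTop (nhds 0) := by
    have h2 : Tendsto (fun s : ℝ => (s + 1)⁻¹) atTop (nhds 0) :=
      tendsto_inv_atTop_zero.comp (tendsto_atTop_add_const_right atTop 1 tendsto_id)
    have h3 := tendsto_gphi_atTop.mul h2
    rw [mul_zero] at h3
    have h4 := h3.neg
    rw [neg_zero] at h4
    exact h4.congr fun s => by rw [hf]; ring
  have hkey := integral_Ioi_of_hasDerivAt_of_tendsto' hd hint htend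
  have h5 : (∫ x in Set.Ioi t, f' x) = gphi t / (t + 1) := by
    rw [hkey, hf]; ring
  have h6 : (∫ x in Set.Ioi t, f' x) ≤ Phibar t := by
    unfold Phibar
    exact MeasureTheory.setIntegral_mono_on hint integrable_gphi.integrableOn
      measurableSet_Ioi hfle
  linarith

/-- Symmetry: `Phibar (-t) = 1 - Phibar t`. -/
lemma phibar_neg (t : ℝ) : Phibar (-t) = 1 - Phibar t := by
  have h1 : (∫ s in Set.Iic t, gphi s) + (∫ s in Set.Ioi t, gphi s) = ∫ s, gphi s :=
    intervalIntegral.integral_Iic_add_Ioi integrable_gphi.integrableOn integrable_gphi.integrableOn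
  have h2 : (∫ s in Set.Iic t, gphi s) = Phibar (-t) := by
    rw [show Phibar (-t) = ∫ s in Set.Ioi (-t), gphi s from rfl,
      ← integral_comp_neg_Iic]
    congr 1; ext s
    unfold gphi
    rw [neg_pow, neg_one_pow_eq_one_iff_even (by norm_num : (-1:ℝ) ≠ 1) |>.2 (by norm_num)]
    ring_nf
  rw [integral_gphi] at h1
  have : Phibar t = ∫ s in Set.Ioi t, gphi s := rfl
  linarith

lemma phibar_small {p : ℝ} (hp : 0 < p) : Phibar (max 1 (1/p)) < p := by
  set t := max 1 (1/p) with hT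
  have ht1 : (1:ℝ) ≤ t := le_max_left _ _
  have ht0 : 0 < t := by linarith
  have h1 := phibar_upper ht0
  have h2 : gphi t ≤ (Real.sqrt (2*π))⁻¹ := gphi_le t
  have h3 : (Real.sqrt (2*π))⁻¹ ≤ 1/2 := by
    rw [inv_le_comm₀ sqrt2pi_pos (by norm_num)]
    linarith [sqrt2pi_lb]
  have h4 : 1/p ≤ t := le_max_right _ _
  have h5 : 1/t ≤ p := by
    rw [div_le_iff₀ ht0]
    rw [div_le_iff₀ hp] at h4
    linarith
  have h6 : gphi t / t ≤ (1/2) * (1/t) := by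
    rw [div_eq_mul_one_div (gphi t) t]
    apply mul_le_mul (by linarith) le_rfl (by positivity) (by norm_num)
  nlinarith [phibar_nonneg t]

lemma exists_phibar {p : ℝ} (h0 : 0 < p) (h1 : p < 1) : ∃ t, Phibar t = p := by
  set u := max 1 (1/p) with hu
  set v := max 1 (1/(1-p)) with hv
  have hup : Phibar u < p := phibar_small h0
  have hvp : Phibar v < 1 - p := phibar_small (by linarith)
  have hneg : p < Phibar (-v) := by
    rw [phibar_neg]; linarith
  have hcont : ContinuousOn Phibar (Set.uIcc (-v) u) := continuous_phibar.continuousOn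
  have hmem : p ∈ Set.uIcc (Phibar (-v)) (Phibar u) := by
    rw [Set.mem_uIcc]
    right
    exact ⟨hup.le, hneg.le⟩
  obtain ⟨t, _, ht⟩ := intermediate_value_uIcc hcont hmem
  exact ⟨t, ht⟩

lemma phibarInv_spec {p : ℝ} (h0 : 0 < p) (h1 : p < 1) : Phibar (PhibarInv p) = p :=
  Function.invFun_eq (exists_phibar h0 h1)

lemma exp_half_lb : 1.6487 ≤ Real.exp (1/2) := by
  have h : Real.exp (1/2) * Real.exp (1/2) = Real.exp 1 := by rw [← Real.exp_add]; norm_num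
  nlinarith [Real.exp_pos (1/2 : ℝ), Real.exp_one_gt_d9]

lemma exp_half_ub : Real.exp (1/2) ≤ 1.6488 := by
  have h : Real.exp (1/2) * Real.exp (1/2) = Real.exp 1 := by rw [← Real.exp_add]; norm_num
  nlinarith [Real.exp_pos (1/2 : ℝ), Real.exp_one_lt_d9]

lemma exp_two_lb : 7.389 ≤ Real.exp 2 := by
  have h : Real.exp 1 * Real.exp 1 = Real.exp 2 := by rw [← Real.exp_add]; norm_num
  nlinarith [Real.exp_pos (1:ℝ), Real.exp_one_gt_d9]

lemma exp_two_ub : Real.exp 2 ≤ 7.3891 := by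
  have h : Real.exp 1 * Real.exp 1 = Real.exp 2 := by rw [← Real.exp_add]; norm_num
  nlinarith [Real.exp_pos (1:ℝ), Real.exp_one_lt_d9]

lemma gphi1_lb : (0.24:ℝ) ≤ gphi 1 := by
  have h : gphi 1 = ((Real.sqrt (2*π)) * Real.exp (1/2))⁻¹ := by
    unfold gphi
    rw [mul_inv, show -((1:ℝ)^2)/2 = -(1/2) by norm_num, Real.exp_neg]
  rw [h, le_inv_comm₀ (by norm_num) (by positivity)]
  nlinarith [sqrt2pi_ub, exp_half_ub, sqrt2pi_pos, Real.exp_pos (1/2:ℝ)]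

lemma gphi1_ub : gphi 1 ≤ 0.25 := by
  have h : gphi 1 = ((Real.sqrt (2*π)) * Real.exp (1/2))⁻¹ := by
    unfold gphi
    rw [mul_inv, show -((1:ℝ)^2)/2 = -(1/2) by norm_num, Real.exp_neg]
  rw [h, inv_le_comm₀ (by positivity) (by norm_num)]
  nlinarith [sqrt2pi_lb, exp_half_lb, sqrt2pi_pos, Real.exp_pos (1/2:ℝ)]

lemma gphi2_lb : (0.05:ℝ) ≤ gphi 2 := by
  have h : gphi 2 = ((Real.sqrt (2*π)) * Real.exp 2)⁻¹ := by
    unfold gphi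
    rw [mul_inv, show -((2:ℝ)^2)/2 = -2 by norm_num, Real.exp_neg]
  rw [h, le_inv_comm₀ (by norm_num) (by positivity)]
  nlinarith [sqrt2pi_ub, exp_two_ub, sqrt2pi_pos, Real.exp_pos (2:ℝ)]

lemma gphi2_ub : gphi 2 ≤ 0.0542 := by
  have h : gphi 2 = ((Real.sqrt (2*π)) * Real.exp 2)⁻¹ := by
    unfold gphi
    rw [mul_inv, show -((2:ℝ)^2)/2 = -2 by norm_num, Real.exp_neg]
  rw [h, inv_le_comm₀ (by positivity) (by norm_num)]
  nlinarith [sqrt2pi_lb, exp_two_lb, sqrt2pi_pos, Real.exp_pos (2:ℝ)]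

lemma exp22_lb : (8.34:ℝ) ≤ Real.exp 2.2 := by
  have h : Real.exp 2.2 = Real.exp 2 * Real.exp 0.2 := by rw [← Real.exp_add]; norm_num
  nlinarith [exp_two_lb, Real.add_one_le_exp (0.2:ℝ), Real.exp_pos (0.2:ℝ)]

lemma exp_neg22_le : Real.exp (-2.2) ≤ 0.12 := by
  rw [Real.exp_neg, inv_le_comm₀ (Real.exp_pos _) (by norm_num)]
  linarith [exp22_lb]

lemma exp13_ub : Real.exp 1.3 ≤ 4.4 := by
  have h : Real.exp 1.3 * Real.exp 0.7 = Real.exp 2 := by rw [← Real.exp_add]; norm_num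
  nlinarith [Real.exp_pos (1.3:ℝ), Real.add_one_le_exp (0.7:ℝ), exp_two_ub]

lemma log2_ub : Real.log 2 ≤ 0.7 := le_trans Real.log_two_lt_d9.le (by norm_num)

lemma log_sqrt2pi_ub : Real.log (Real.sqrt (2*π)) ≤ 1 := by
  rw [Real.log_le_iff_le_exp sqrt2pi_pos]
  calc Real.sqrt (2*π) ≤ 2.51 := sqrt2pi_ub
    _ ≤ Real.exp 1 := by linarith [Real.exp_one_gt_d9]

set_option maxHeartbeats 1000000 in
theorem quantile_bias_bound :
    ∃ c : ℝ, 0 < c ∧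
      ∀ (n k q : ℕ), 0 < n → 1 ≤ k → k ≤ n - 1 → 1 ≤ q → (q : ℝ) ≤ 0.7 * ((n : ℝ) - k) →
        PhibarInv ((q : ℝ) / n) - PhibarInv ((q : ℝ) / ((n : ℝ) - k)) ≤
          c * Real.log ((n : ℝ) / ((n : ℝ) - k)) /
            max (Real.sqrt (max (Real.log (((n : ℝ) - k) / q)) 0)) 1 := by
  refine ⟨100, by norm_num, ?_⟩
  intro n k q hn hk1 hkn hq1 hq7
  have hk_le : (k:ℝ) ≤ (n:ℝ) - 1 := by
    have h : ((k:ℕ):ℝ) ≤ (((n-1:ℕ)):ℝ) := by exact_mod_cast hkn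
    rwa [Nat.cast_sub (by omega), Nat.cast_one] at h
  have hk1' : (1:ℝ) ≤ (k:ℝ) := by exact_mod_cast hk1
  have hq0 : (1:ℝ) ≤ (q:ℝ) := by exact_mod_cast hq1
  have hn0 : (0:ℝ) < (n:ℝ) := by exact_mod_cast hn
  set N : ℝ := (n:ℝ) - (k:ℝ) with hN_def
  have hN1 : 1 ≤ N := by rw [hN_def]; linarith
  have hN0 : 0 < N := by linarith
  have hNn : N < (n:ℝ) := by rw [hN_def]; linarith
  set A : ℝ := (q:ℝ) / N with hA_def
  set B : ℝ := (q:ℝ) / (n:ℝ) with hB_def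
  have hA0 : 0 < A := by rw [hA_def]; positivity
  have hB0 : 0 < B := by rw [hB_def]; positivity
  have hA7 : A ≤ 0.7 := by rw [hA_def, div_le_iff₀ hN0]; linarith
  have hA1 : A < 1 := lt_of_le_of_lt hA7 (by norm_num)
  have hBA : B < A := by
    rw [hA_def, hB_def]
    apply div_lt_div_of_pos_left (by linarith) hN0 hNn
  have hB1 : B < 1 := lt_trans hBA hA1
  set x := PhibarInv A with hx_def
  set y := PhibarInv B with hy_def
  have hPx : Phibar x = A := phibarInv_spec hA0 hA1
  have hPy : Phibar y = B := phibarInv_spec hB0 hB1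
  have hxy : x ≤ y := by
    by_contra hcon
    push_neg at hcon
    have := phibar_strict hcon
    rw [hPx, hPy] at this
    linarith
  have hyx0 : 0 ≤ y - x := by linarith
  set L := Real.log ((n:ℝ) / N) with hL_def
  set M := Real.log (N / (q:ℝ)) with hM_def
  have hABr : A / B = (n:ℝ) / N := by
    rw [hA_def, hB_def]
    field_simp
  have hL_eq : Real.log A - Real.log B = L := by
    rw [← Real.log_div (ne_of_gt hA0) (ne_of_gt hB0), hABr]
  have hL0 : 0 < L := by
    rw [hL_def]
    apply Real.log_pos
    rw [lt_div_iff₀ hN0]; linarith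
  have hMA : M = -Real.log A := by
    rw [hM_def, hA_def, ← Real.log_inv, inv_div]
  have hM0 : 0 ≤ M := by
    rw [hMA]
    linarith [Real.log_neg hA0 hA1]
  rw [max_eq_left hM0]
  set D := max (Real.sqrt M) 1 with hD_def
  have hD1 : 1 ≤ D := le_max_right _ _
  have hD0 : 0 < D := by linarith
  show y - x ≤ 100 * L / D
  clear_value x y A B N L M
  clear hA_def hB_def hN_def hL_def hM_def hx_def hy_def
  -- global lower bound on x
  have hx_neg1 : -1 < x := by
    by_contra hcon
    push_neg at hcon
    have h1 : Phibar (-1) ≤ Phibar x := phibar_mono hcon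
    have h2 : Phibar (-1) = 1 - Phibar 1 := phibar_neg 1
    have h3 : Phibar 1 ≤ gphi 1 / 1 := phibar_upper one_pos
    rw [hPx] at h1
    linarith [gphi1_ub]
  have hAB_L : A - B ≤ A * L := by
    have h1 := Real.log_le_sub_one_of_pos (show 0 < B / A by positivity)
    rw [Real.log_div (ne_of_gt hB0) (ne_of_gt hA0)] at h1
    have h2 : B / A * A = B := by field_simp
    have h3 : 0 ≤ L - 1 + B / A := by linarith
    have h4 : 0 ≤ A * (L - 1 + B / A) := mul_nonneg hA0.le h3
    linarith only [h4, h2]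
  rcases le_or_gt 1 x with hx1 | hx1
  · -- Case A : 1 ≤ x
    have hy1 : 1 ≤ y := le_trans hx1 hxy
    have hx0 : (0:ℝ) < x := by linarith
    have hy0 : (0:ℝ) < y := by linarith
    have hAub : A ≤ gphi x / x := by rw [← hPx]; exact phibar_upper hx0
    have hAlb : gphi x / (x + 1) ≤ A := by rw [← hPx]; exact phibar_lower hx0.le
    have hBub : B ≤ gphi y / y := by rw [← hPy]; exact phibar_upper hy0
    have hgx : gphi x ≤ 2 * x * A := by
      rw [div_le_iff₀ (by linarith)] at hAlb
      have h1 : A * (x + 1) ≤ A * (2 * x) := by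
        apply mul_le_mul_of_nonneg_left (by linarith) hA0.le
      linarith only [hAlb, h1]
    have hgyB : B * y ≤ gphi y := by rwa [le_div_iff₀ hy0] at hBub
    have hAx : A * x ≤ gphi x := by rwa [le_div_iff₀ hx0] at hAub
    set E := Real.exp ((y^2 - x^2)/2) with hE
    have hE0 : 0 < E := Real.exp_pos _
    have hE_id : gphi x = E * gphi y := by
      rw [hE]
      unfold gphi
      rw [show Real.exp ((y^2 - x^2)/2) * ((Real.sqrt (2*π))⁻¹ * Real.exp (-(y^2)/2)) =
        (Real.sqrt (2*π))⁻¹ * (Real.exp ((y^2 - x^2)/2) * Real.exp (-(y^2)/2)) from by ring,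
        ← Real.exp_add]
      have harg : -(x^2)/2 = (y^2 - x^2)/2 + -(y^2)/2 := by ring
      rw [harg]
    have hxAyA : x * A ≤ y * A := mul_le_mul_of_nonneg_right hxy hA0.le
    have hEB : E * B ≤ 2 * A := by
      have h1 : E * (B * y) ≤ E * gphi y := mul_le_mul_of_nonneg_left hgyB hE0.le
      rw [← hE_id] at h1
      have h2 : (E * B) * y ≤ (2 * A) * y := by
        have hexp : E * (B * y) = (E * B) * y := by ring
        rw [hexp] at h1
        calc (E * B) * y ≤ gphi x := h1
          _ ≤ 2 * x * A := hgx
          _ ≤ (2 * A) * y := by linarith only [hxAyA, hgx]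
      exact (mul_le_mul_iff_of_pos_right hy0).1 h2
    -- bound 2
    have hE_le : E ≤ 2 * (A / B) := by
      rw [show 2 * (A/B) = (2*A)/B from by ring, le_div_iff₀ hB0]
      exact hEB
    have hlogE : Real.log E = (y^2 - x^2)/2 := Real.log_exp _
    have hlog2L : Real.log E ≤ Real.log 2 + L := by
      have h1 := Real.log_le_log hE0 hE_le
      rw [Real.log_mul (by norm_num) (by positivity),
        Real.log_div (ne_of_gt hA0) (ne_of_gt hB0)] at h1
      linarith [hL_eq]
    have hbound2 : (y - x) * x ≤ Real.log 2 + L := by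
      linarith only [sq_nonneg (y - x), hlogE, hlog2L]
    -- bound 1
    have hgylb : x * B ≤ 2 * gphi y := by
      have h1 : A * x ≤ E * gphi y := by rw [← hE_id]; exact hAx
      have h2 : (E * B) * gphi y ≤ (2 * A) * gphi y :=
        mul_le_mul_of_nonneg_right hEB (gphi_pos y).le
      have h3 : (A * x) * B ≤ (E * gphi y) * B := mul_le_mul_of_nonneg_right h1 hB0.le
      have h4 : A * (x * B) ≤ A * (2 * gphi y) := by linarith only [h2, h3]
      exact (mul_le_mul_iff_of_pos_left hA0).1 h4
    have hsand : (y - x) * gphi y ≤ A - B := by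
      rw [← hPx, ← hPy, phibar_sub hxy]
      apply integral_Ioc_gphi_ge hxy
      intro s hs
      apply gphi_anti
      have hys : (0:ℝ) ≤ (y - s) * (y + s) :=
        mul_nonneg (by linarith [hs.2]) (by linarith [hs.1, hs.2, hx1])
      linarith only [hys]
    have hb1 : (y - x) * (x * B) ≤ 2 * (A - B) := by
      have h1 : (y - x) * (x * B) ≤ (y - x) * (2 * gphi y) :=
        mul_le_mul_of_nonneg_left hgylb hyx0
      linarith only [h1, hsand]
    have hcore : (y - x) * x ≤ 4 * L := by
      rcases le_or_gt A (2*B) with hr | hr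
      · have h5a : A * L ≤ (2 * B) * L := mul_le_mul_of_nonneg_right hr hL0.le
        have h5 : A - B ≤ 2 * B * L := by linarith [hAB_L]
        have h6 : B * ((y - x) * x) ≤ B * (4 * L) := by linarith only [hb1, h5]
        exact (mul_le_mul_iff_of_pos_left hB0).1 h6
      · have h6 : (2:ℝ) ≤ A / B := by
          rw [le_div_iff₀ hB0]; linarith
        have h7 := Real.log_le_log (by norm_num : (0:ℝ) < 2) h6
        rw [Real.log_div (ne_of_gt hA0) (ne_of_gt hB0)] at h7
        have h5 : Real.log 2 ≤ L := by linarith [hL_eq]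
        linarith [hbound2, hL0]
    -- denominator bound
    have hlog_gphi : Real.log (gphi x) = -Real.log (Real.sqrt (2*π)) - x^2/2 := by
      unfold gphi
      rw [Real.log_mul (inv_ne_zero (ne_of_gt sqrt2pi_pos)) (Real.exp_ne_zero _),
        Real.log_inv, Real.log_exp]
      ring
    have hMle : M ≤ 4 * x^2 := by
      rw [hMA]
      have h6 : gphi x / (2*x) ≤ A := by
        have h7 : gphi x / (2*x) ≤ gphi x / (x+1) := by
          apply div_le_div_of_nonneg_left (gphi_pos x).le (by linarith) (by linarith)
        linarith
      have h8 := Real.log_le_log (div_pos (gphi_pos x) (by linarith)) h6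
      rw [Real.log_div (ne_of_gt (gphi_pos x)) (by linarith : (0:ℝ) < 2*x).ne',
        Real.log_mul (by norm_num) (ne_of_gt hx0), hlog_gphi] at h8
      have hlogx : Real.log x ≤ x - 1 := Real.log_le_sub_one_of_pos hx0
      have hxx : x ≤ x^2 := by
        have := mul_nonneg (by linarith : (0:ℝ) ≤ x - 1) (by linarith : (0:ℝ) ≤ x)
        linarith only [this]
      linarith only [h8, hlogx, hxx, log_sqrt2pi_ub, log2_ub, hx1]
    have hDx : D ≤ 2 * x := by
      apply max_le
      · have h9 : Real.sqrt M ≤ Real.sqrt (4*x^2) := Real.sqrt_le_sqrt hMle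
        rwa [show 4*x^2 = (2*x)^2 from by ring, Real.sqrt_sq (by linarith)] at h9
      · linarith
    rw [le_div_iff₀ hD0]
    have hfin : (y - x) * D ≤ (y - x) * (2 * x) := mul_le_mul_of_nonneg_left hDx hyx0
    linarith only [hfin, hcore, hL0]
  · -- x < 1
    have hA12 : (0.12:ℝ) ≤ A := by
      have h4 : Phibar 1 ≤ Phibar x := phibar_mono hx1.le
      have h5 : gphi 1 / (1 + 1) ≤ Phibar 1 := phibar_lower (by norm_num)
      rw [hPx] at h4
      linarith [gphi1_lb]
    have hlogA : (-2.2:ℝ) ≤ Real.log A := by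
      have h7 : (-2.2:ℝ) ≤ Real.log 0.12 :=
        (Real.le_log_iff_exp_le (by norm_num)).2 exp_neg22_le
      linarith [Real.log_le_log (by norm_num : (0:ℝ) < 0.12) hA12]
    have hM22 : M ≤ 2.2 := by rw [hMA]; linarith
    have hD15 : D ≤ 1.5 := by
      apply max_le
      · have h9 : Real.sqrt M ≤ Real.sqrt 2.25 := Real.sqrt_le_sqrt (by linarith)
        rwa [show (2.25:ℝ) = 1.5^2 from by norm_num, Real.sqrt_sq (by norm_num)] at h9
      · norm_num
    have hDfin : (y - x) * D ≤ (y - x) * 1.5 := mul_le_mul_of_nonneg_left hD15 hyx0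
    rcases le_or_gt y 2 with hy2 | hy2
    · -- Case B : y ≤ 2
      have hble : (y - x) * gphi 2 ≤ A - B := by
        rw [← hPx, ← hPy, phibar_sub hxy]
        apply integral_Ioc_gphi_ge hxy
        intro s hs
        apply gphi_anti
        have hys : (0:ℝ) ≤ (2 - s) * (2 + s) :=
          mul_nonneg (by linarith [hs.2]) (by linarith [hs.1, hx_neg1])
        linarith only [hys]
      have h1 : y - x ≤ 14 * L := by
        have h2 : A * L ≤ 0.7 * L := mul_le_mul_of_nonneg_right hA7 hL0.le
        have h3 : A - B ≤ 0.7 * L := by linarith [hAB_L]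
        have h4 : (y - x) * 0.05 ≤ (y - x) * gphi 2 :=
          mul_le_mul_of_nonneg_left gphi2_lb hyx0
        linarith only [h2, h3, h4, hble, hAB_L]
      rw [le_div_iff₀ hD0]
      linarith only [hDfin, hL0, h1, hyx0]
    · -- Case C : 2 < y
      have hBub2 : B ≤ gphi 2 / 2 := by
        rw [← hPy]
        calc Phibar y ≤ Phibar 2 := phibar_mono hy2.le
          _ ≤ gphi 2 / 2 := phibar_upper (by norm_num)
      have hr44 : 4.4 * B ≤ A := by linarith [gphi2_ub, hBub2, hA12]
      have hL13 : (1.3:ℝ) ≤ L := by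
        have h6 : (4.4:ℝ) ≤ A / B := by rw [le_div_iff₀ hB0]; linarith
        have h9 : (1.3:ℝ) ≤ Real.log (A/B) :=
          (Real.le_log_iff_exp_le (by positivity)).2 (le_trans exp13_ub h6)
        rw [Real.log_div (ne_of_gt hA0) (ne_of_gt hB0)] at h9
        linarith [hL_eq]
      have hyexp : B ≤ Real.exp (-(y^2)/2) := by
        have h10 : Phibar y ≤ gphi y / y := phibar_upper (by linarith)
        rw [hPy] at h10
        have h11 : gphi y / y ≤ Real.exp (-(y^2)/2) := by
          unfold gphi
          rw [div_le_iff₀ (by linarith)]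
          have h12 : (Real.sqrt (2*π))⁻¹ ≤ 1 := by
            rw [inv_le_one_iff₀]; right; linarith [sqrt2pi_lb]
          have h13 : (Real.sqrt (2*π))⁻¹ * Real.exp (-(y^2)/2) ≤ 1 * Real.exp (-(y^2)/2) :=
            mul_le_mul_of_nonneg_right h12 (Real.exp_pos _).le
          have h14 : (0:ℝ) ≤ (y - 1) * Real.exp (-(y^2)/2) :=
            mul_nonneg (by linarith) (Real.exp_pos _).le
          linarith only [h13, h14]
        linarith
      have hyB : Real.log B ≤ -(y^2)/2 := (Real.log_le_iff_le_exp hB0).2 hyexp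
      have hLy : y^2/2 - 2.2 ≤ L := by
        rw [← hL_eq]
        linarith [hyB, hlogA]
      have hyx4 : y - x ≤ 4 * L := by
        rcases le_or_gt (y^2) 8.8 with h | h
        · linarith only [sq_nonneg (y - 3), hL13, hx_neg1, h]
        · have h15 : (0:ℝ) ≤ (y - 2) * (y + 1) := mul_nonneg (by linarith) (by linarith)
          linarith only [h15, hLy, hx_neg1, h]
      rw [le_div_iff₀ hD0]
      linarith only [hDfin, hL0, hyx4, hyx0]
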